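/- Let 0 < α < 1. There exist constants K > 0 and M ∈ ℕ such that for all m ≥ M and all θ ∈ (K/m, π), (1/π) ∫_0^∞ dx / (x^α ((1+x)² − 2(1+x)cos θ + 1)(1+x)^{m+1}) < sin^α(θ/2) / (sin θ · (1−cos θ)^α). -/

import Mathlib

open Real MeasureTheory Set Filter
set_option maxHeartbeats 1600000


lemma aux_tail (n : ℕ) (c : ℝ) (hc : 0 ≤ c) :
    IntegrableOn (fun x : ℝ => ((1+x)^(n+2) : ℝ)⁻¹) (Ioi c) ∧
      ∫ x in Ioi c, ((1+x)^(n+2) : ℝ)⁻¹ ≤ ((n:ℝ)+1)⁻¹ := by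
  set g : ℝ → ℝ := fun x => -(((n:ℝ)+1)⁻¹ * ((1+x)^(n+1))⁻¹) with hgdef
  have hderiv : ∀ x ∈ Ici c, HasDerivAt g (((1+x)^(n+2) : ℝ)⁻¹) x := by
    intro x hx
    have hx0 : (0:ℝ) < 1 + x := by have : c ≤ x := hx; linarith
    have h1 : HasDerivAt (fun y : ℝ => 1 + y) 1 x := (hasDerivAt_id x).const_add 1
    have h2 := (h1.pow (n+1)).inv (pow_ne_zero _ (ne_of_gt hx0))
    have h3 := h2.const_mul (((n:ℝ)+1)⁻¹)
    have h4 : HasDerivAt g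
        (-((((n:ℝ)+1)⁻¹ * (-(↑(n + 1) * (1 + x) ^ (n + 1 - 1) * 1) / ((1 + x) ^ (n + 1)) ^ 2)))) x := by
      exact h3.neg
    convert h4 using 1
    have hne : (1+x) ≠ 0 := ne_of_gt hx0
    have hne2 : ((n:ℝ)+1) ≠ 0 := by positivity
    simp only [Nat.add_sub_cancel, Nat.cast_add, Nat.cast_one, mul_one]
    field_simp
    ring
  have hpos : ∀ x ∈ Ioi c, (0:ℝ) ≤ ((1+x)^(n+2) : ℝ)⁻¹ := by
    intro x hx
    have : (0:ℝ) < 1 + x := by have : c < x := hx; linarith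
    positivity
  have hlim : Tendsto g atTop (nhds 0) := by
    have h1 : Tendsto (fun x : ℝ => (1+x)^(n+1)) atTop atTop :=
      (tendsto_pow_atTop (Nat.succ_ne_zero n)).comp (tendsto_atTop_add_const_left _ 1 tendsto_id)
    have h2 : Tendsto (fun x : ℝ => ((1+x)^(n+1))⁻¹) atTop (nhds 0) := h1.inv_tendsto_atTop
    have h3 := (h2.const_mul (((n:ℝ)+1)⁻¹)).neg
    simpa using h3
  refine ⟨integrableOn_Ioi_deriv_of_nonneg' hderiv hpos hlim, ?_⟩
  rw [integral_Ioi_of_hasDerivAt_of_nonneg' hderiv hpos hlim]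
  simp only [hgdef, zero_sub, neg_neg]
  have hc0 : (0:ℝ) < 1 + c := by linarith
  have h1 : (1:ℝ) ≤ (1+c)^(n+1) := one_le_pow₀ (by linarith)
  calc ((n:ℝ)+1)⁻¹ * ((1+c)^(n+1))⁻¹ ≤ ((n:ℝ)+1)⁻¹ * 1 := by
        have h2 : ((1+c:ℝ)^(n+1))⁻¹ ≤ 1 := inv_le_one_of_one_le₀ h1
        have h3 : (0:ℝ) ≤ ((n:ℝ)+1)⁻¹ := by positivity
        exact mul_le_mul_of_nonneg_left h2 h3
    _ = ((n:ℝ)+1)⁻¹ := mul_one _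

lemma aux_alg (p s c2 t A B E : ℝ) (hs : s ≠ 0) (hc2 : c2 ≠ 0) (ht : t ≠ 0) (hB : B ≠ 0)
    (hE : E * (s * B) = s^2 * A) :
    2*(2*s^2)*p*(A/((2*s*c2)*(t*B))) = 2/t*p*E/c2 := by
  field_simp
  have h0 : s * (s*p*A - p*B*E) = 0 := by linear_combination (-p) * hE
  rcases mul_eq_zero.mp h0 with h | h
  · exact absurd h hs
  · linarith

theorem key_lemma (α : ℝ) (hα : 0 < α ∧ α < 1) :
    ∃ (K : ℝ) (M : ℕ), 0 < K ∧ ∀ m : ℕ, M ≤ m → ∀ θ : ℝ, K / m < θ → θ < π →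
      (1 / π) * ∫ x in Set.Ioi (0 : ℝ),
          1 / (x ^ α * ((1 + x) ^ 2 - 2 * (1 + x) * Real.cos θ + 1) * (1 + x) ^ (m + 1))
        < Real.sin (θ / 2) ^ α / (Real.sin θ * (1 - Real.cos θ) ^ α) := by
  obtain ⟨hα0, hα1⟩ := hα
  have h1α : (0:ℝ) < 1 - α := by linarith
  set C : ℝ := 1/(1-α) + 1 with hCdef
  have hCpos : (0:ℝ) < C := by positivity
  refine ⟨C ^ (1/(1-α)), 1, rpow_pos_of_pos hCpos _, ?_⟩
  intro m hm θ hθK hθπ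
  set K : ℝ := C ^ (1/(1-α)) with hKdef
  have hKpos : 0 < K := rpow_pos_of_pos hCpos _
  have hm0 : (0:ℝ) < (m:ℝ) := by exact_mod_cast Nat.lt_of_lt_of_le Nat.zero_lt_one hm
  have hθ0 : 0 < θ := lt_trans (by positivity) hθK
  -- trig facts
  have hs : 0 < Real.sin (θ/2) := Real.sin_pos_of_pos_of_lt_pi (by linarith) (by linarith [Real.pi_pos])
  have hc2 : 0 < Real.cos (θ/2) :=
    Real.cos_pos_of_mem_Ioo ⟨by linarith [Real.pi_pos], by linarith⟩
  have hc2le : Real.cos (θ/2) ≤ 1 := Real.cos_le_one _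
  have hsinθ : 0 < Real.sin θ := Real.sin_pos_of_pos_of_lt_pi hθ0 hθπ
  have hhalf : 1 - Real.cos θ = 2 * Real.sin (θ/2)^2 := by
    have h := Real.cos_two_mul (θ/2)
    have h2 := Real.sin_sq_add_cos_sq (θ/2)
    rw [show 2*(θ/2) = θ by ring] at h
    nlinarith
  have hsin2 : Real.sin θ = 2 * Real.sin (θ/2) * Real.cos (θ/2) := by
    have h := Real.sin_two_mul (θ/2)
    rw [show 2*(θ/2) = θ by ring] at h
    linarith
  have h1c : 0 < 1 - Real.cos θ := by rw [hhalf]; positivity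
  set s := Real.sin (θ/2) with hsdef
  set R : ℝ := s ^ α / (Real.sin θ * (1 - Real.cos θ) ^ α) with hRdef
  set e : ℝ := ((m:ℝ))⁻¹ with hedef
  have he : 0 < e := by positivity
  set g : ℝ → ℝ := fun x => 1 / (x ^ α * (1+x)^(m+2)) with hgdef
  have hgm : Measurable g := by
    rw [hgdef]; fun_prop
  -- integrability of g on pieces
  have hrpow_int : IntegrableOn (fun x : ℝ => x ^ (-α)) (Ioc 0 e) := by
    have := intervalIntegral.intervalIntegrable_rpow' (r := -α) (a := 0) (b := e) (by linarith)
    exact (intervalIntegrable_iff_integrableOn_Ioc_of_le he.le).mp this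
  have hg_le_rpow : ∀ x ∈ Ioc (0:ℝ) e, g x ≤ x ^ (-α) := by
    intro x hx
    have hx0 : 0 < x := hx.1
    have hxa : 0 < x ^ α := rpow_pos_of_pos hx0 _
    have hp : (1:ℝ) ≤ (1+x)^(m+2) := one_le_pow₀ (by linarith)
    rw [Real.rpow_neg hx0.le, ← one_div]
    apply one_div_le_one_div_of_le hxa
    nlinarith
  have hg_nonneg : ∀ x : ℝ, 0 < x → 0 ≤ g x := by
    intro x hx
    have : 0 < x ^ α := rpow_pos_of_pos hx _
    have : (0:ℝ) < (1+x)^(m+2) := by positivity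
    positivity
  have hgi1 : IntegrableOn g (Ioc 0 e) := by
    apply Integrable.mono hrpow_int hgm.aestronglyMeasurable
    rw [ae_restrict_iff' measurableSet_Ioc]
    filter_upwards with x hx
    rw [Real.norm_eq_abs, Real.norm_eq_abs, abs_of_nonneg (hg_nonneg x hx.1),
      abs_of_nonneg (Real.rpow_nonneg hx.1.le _)]
    exact hg_le_rpow x hx
  obtain ⟨htail_int, htail_val⟩ := aux_tail m e he.le
  have hg_le_tail : ∀ x ∈ Ioi e, g x ≤ e ^ (-α) * ((1+x)^(m+2))⁻¹ := by
    intro x hx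
    have hex : e < x := hx
    have hx0 : 0 < x := lt_trans he hex
    have hea : 0 < e ^ α := rpow_pos_of_pos he _
    have hxa : e ^ α ≤ x ^ α := Real.rpow_le_rpow he.le hex.le hα0.le
    have hp : (0:ℝ) < (1+x)^(m+2) := by positivity
    rw [Real.rpow_neg he.le]
    rw [hgdef]
    simp only [one_div]
    rw [mul_inv]
    apply mul_le_mul_of_nonneg_right _ (by positivity)
    exact inv_anti₀ hea hxa
  have hgi2 : IntegrableOn g (Ioi e) := by
    apply Integrable.mono (htail_int.const_mul (e ^ (-α))) hgm.aestronglyMeasurable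
    rw [ae_restrict_iff' measurableSet_Ioi]
    filter_upwards with x hx
    have hx0 : 0 < x := lt_trans he hx
    rw [Real.norm_eq_abs, Real.norm_eq_abs, abs_of_nonneg (hg_nonneg x hx0)]
    refine le_trans (hg_le_tail x hx) (le_abs_self _)
  have hunion : Ioc (0:ℝ) e ∪ Ioi e = Ioi 0 := Ioc_union_Ioi_eq_Ioi he.le
  have hgi : IntegrableOn g (Ioi 0) := by
    rw [← hunion]; exact hgi1.union hgi2
  -- bound the g integral
  have hm1 : (m:ℝ)^(α-1) = ((m:ℝ)^(1-α))⁻¹ := by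
    rw [show α-1 = -(1-α) by ring, Real.rpow_neg hm0.le]
  have hint1 : ∫ x in Ioc (0:ℝ) e, g x ≤ (m:ℝ)^(α-1) / (1-α) := by
    have h1 : ∫ x in Ioc (0:ℝ) e, g x ≤ ∫ x in Ioc (0:ℝ) e, x ^ (-α) :=
      setIntegral_mono_on hgi1 hrpow_int measurableSet_Ioc hg_le_rpow
    have h2 : ∫ x in Ioc (0:ℝ) e, x ^ (-α) = (e ^ (1-α)) / (1-α) := by
      rw [← intervalIntegral.integral_of_le he.le,
        integral_rpow (Or.inl (by linarith : (-1:ℝ) < -α)),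
        Real.zero_rpow (by linarith : -α + 1 ≠ 0),
        show -α+1 = 1-α by ring]
      ring
    have h3 : e ^ (1-α) = (m:ℝ)^(α-1) := by
      rw [hedef, Real.inv_rpow hm0.le, ← hm1]
    rw [h2, h3] at h1
    exact h1
  have hint2 : ∫ x in Ioi e, g x ≤ (m:ℝ)^(α-1) := by
    have h1 : ∫ x in Ioi e, g x ≤ ∫ x in Ioi e, e ^ (-α) * ((1+x)^(m+2))⁻¹ :=
      setIntegral_mono_on hgi2 (htail_int.const_mul _) measurableSet_Ioi hg_le_tail
    rw [integral_const_mul] at h1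
    have h2 : e ^ (-α) = (m:ℝ)^α := by
      rw [hedef, Real.inv_rpow hm0.le, ← Real.rpow_neg hm0.le, neg_neg]
    have h3 : (0:ℝ) ≤ (m:ℝ)^α := Real.rpow_nonneg hm0.le _
    have h4 : ((m:ℝ)+1)⁻¹ ≤ ((m:ℝ))⁻¹ := by
      apply inv_anti₀ hm0; linarith
    have h5 : (m:ℝ)^α * ((m:ℝ))⁻¹ = (m:ℝ)^(α-1) := by
      rw [Real.rpow_sub hm0, Real.rpow_one, div_eq_mul_inv]
    calc ∫ x in Ioi e, g x ≤ e ^ (-α) * ∫ x in Ioi e, ((1+x)^(m+2))⁻¹ := h1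
      _ ≤ (m:ℝ)^α * ((m:ℝ)+1)⁻¹ := by
          rw [h2]; exact mul_le_mul_of_nonneg_left htail_val h3
      _ ≤ (m:ℝ)^α * ((m:ℝ))⁻¹ := mul_le_mul_of_nonneg_left h4 h3
      _ = (m:ℝ)^(α-1) := h5
  have hgint : ∫ x in Ioi (0:ℝ), g x ≤ C * (m:ℝ)^(α-1) := by
    rw [← hunion, setIntegral_union (Ioc_disjoint_Ioi le_rfl) measurableSet_Ioi hgi1 hgi2]
    calc _ ≤ (m:ℝ)^(α-1) / (1-α) + (m:ℝ)^(α-1) := add_le_add hint1 hint2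
    _ = C * (m:ℝ)^(α-1) := by rw [hCdef]; ring
  -- bound the f integral by c * ∫ g
  set c : ℝ := (2 * (1 - Real.cos θ))⁻¹ with hcdef
  have hcpos : 0 < c := by positivity
  have hfg : (∫ x in Ioi (0:ℝ),
      1 / (x ^ α * ((1 + x) ^ 2 - 2 * (1 + x) * Real.cos θ + 1) * (1 + x) ^ (m + 1)))
      ≤ c * ∫ x in Ioi (0:ℝ), g x := by
    set f : ℝ → ℝ := fun x =>
      1 / (x ^ α * ((1 + x) ^ 2 - 2 * (1 + x) * Real.cos θ + 1) * (1 + x) ^ (m + 1)) with hfdef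
    have hDpos : ∀ x : ℝ, 0 < x → 0 < (1 + x) ^ 2 - 2 * (1 + x) * Real.cos θ + 1 := by
      intro x hx
      have key : (1+x)^2 - 2*(1+x)*Real.cos θ + 1 = x^2 + 2*(1+x)*(1-Real.cos θ) := by ring
      rw [key]
      exact add_pos_of_nonneg_of_pos (sq_nonneg x) (mul_pos (mul_pos two_pos (by linarith)) h1c)
    have h0 : (0:ℝ→ℝ) ≤ᵐ[volume.restrict (Ioi (0:ℝ))] f := by
      rw [EventuallyLE, ae_restrict_iff' measurableSet_Ioi]
      filter_upwards with x hx
      have hx0 : (0:ℝ) < x := hx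
      have hxa : 0 < x ^ α := rpow_pos_of_pos hx0 _
      have hp : (0:ℝ) < (1+x)^(m+1) := by positivity
      have hD := hDpos x hx0
      have hd : 0 < x ^ α * ((1 + x) ^ 2 - 2 * (1 + x) * Real.cos θ + 1) * (1 + x) ^ (m + 1) :=
        mul_pos (mul_pos hxa hD) hp
      simp only [Pi.zero_apply, hfdef]
      exact one_div_nonneg.mpr hd.le
    have hle : f ≤ᵐ[volume.restrict (Ioi (0:ℝ))] fun x => c * g x := by
      rw [EventuallyLE, ae_restrict_iff' measurableSet_Ioi]
      filter_upwards with x hx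
      have hx0 : (0:ℝ) < x := hx
      have hxa : 0 < x ^ α := rpow_pos_of_pos hx0 _
      have hp : (0:ℝ) < (1+x)^(m+1) := by positivity
      have hp2 : (0:ℝ) < (1+x)^(m+2) := by positivity
      have hcg : c * g x = 1 / (2*(1-Real.cos θ) * (x^α * (1+x)^(m+2))) := by
        rw [hcdef, hgdef]
        simp only [one_div]
        rw [← mul_inv]
      have hDge : 2*(1-Real.cos θ)*(1+x) ≤ (1 + x) ^ 2 - 2 * (1 + x) * Real.cos θ + 1 := by
        have key : (1 + x) ^ 2 - 2 * (1 + x) * Real.cos θ + 1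
            = 2*(1-Real.cos θ)*(1+x) + x^2 := by ring
        rw [key]
        linarith [sq_nonneg x]
      have hkey : 2*(1-Real.cos θ) * (x^α * (1+x)^(m+2))
          ≤ x ^ α * ((1 + x) ^ 2 - 2 * (1 + x) * Real.cos θ + 1) * (1 + x) ^ (m + 1) := by
        calc 2*(1-Real.cos θ) * (x^α * (1+x)^(m+2))
            = (x^α*(1+x)^(m+1)) * (2*(1-Real.cos θ)*(1+x)) := by
              rw [pow_succ (1+x) (m+1)]; ring
          _ ≤ (x^α*(1+x)^(m+1)) * ((1 + x) ^ 2 - 2 * (1 + x) * Real.cos θ + 1) :=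
              mul_le_mul_of_nonneg_left hDge (by positivity)
          _ = x ^ α * ((1 + x) ^ 2 - 2 * (1 + x) * Real.cos θ + 1) * (1 + x) ^ (m + 1) := by
              ring
      rw [hfdef, hcg]
      exact one_div_le_one_div_of_le (by positivity) hkey
    have := integral_mono_of_nonneg h0 ((hgi.const_mul c)) hle
    rwa [integral_const_mul] at this
  -- final numeric inequality
  have hπ' : 0 < π := Real.pi_pos
  have hfinal : C * (m:ℝ)^(α-1) < 2 * (1 - Real.cos θ) * π * R := by
    have hKe : K ^ (1-α) = C := by
      rw [hKdef, ← Real.rpow_mul hCpos.le, one_div_mul_cancel (ne_of_gt h1α), Real.rpow_one]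
    have step1 : C * (m:ℝ)^(α-1) < θ^(1-α) := by
      have heq : (K/m)^(1-α) = C * (m:ℝ)^(α-1) := by
        rw [Real.div_rpow hKpos.le hm0.le, hKe, hm1, div_eq_mul_inv]
      rw [← heq]
      exact Real.rpow_lt_rpow (by positivity) hθK h1α
    have hθs : θ ≤ π * s := by
      have h2 := Real.mul_le_sin (x := θ/2) (by linarith) (by linarith)
      have h4 := mul_le_mul_of_nonneg_left h2 hπ'.le
      have h3 : π * (2/π*(θ/2)) = θ := by field_simp
      rw [h3] at h4
      exact h4
    have step2 : θ^(1-α) ≤ π^(1-α) * s^(1-α) := by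
      rw [← Real.mul_rpow hπ'.le hs.le]
      exact Real.rpow_le_rpow hθ0.le hθs h1α.le
    have hπ1 : π^(1-α) ≤ π := by
      calc π^(1-α) ≤ π^(1:ℝ) :=
            Real.rpow_le_rpow_of_exponent_le (by linarith [Real.pi_gt_three]) (by linarith)
        _ = π := Real.rpow_one _
    have h2a : (1:ℝ) ≤ 2^(1-α) := Real.one_le_rpow (by norm_num) h1α.le
    have hsr : (0:ℝ) ≤ s^(1-α) := Real.rpow_nonneg hs.le _
    have hcdiv : 2^(1-α)*π*s^(1-α) ≤ 2^(1-α)*π*s^(1-α)/Real.cos (θ/2) := by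
      rw [le_div_iff₀ hc2]
      have hA : (0:ℝ) ≤ 2^(1-α)*π*s^(1-α) := by positivity
      exact mul_le_of_le_one_right hA hc2le
    have hsne : s ≠ 0 := ne_of_gt hs
    have e1 : ((2:ℝ)*s^2)^α = 2^α * s^(2*α) := by
      rw [Real.mul_rpow (by norm_num) (by positivity), ← Real.rpow_natCast s 2,
        ← Real.rpow_mul hs.le]
      norm_num
    have e2 : (2:ℝ)^(1-α) = 2/2^α := by
      rw [Real.rpow_sub (by norm_num), Real.rpow_one]
    have e3 : s^(1-α) * (s * s^(2*α)) = s^2 * s^α := by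
      have h1 : s * s^(2*α) = s^(1+2*α) := by rw [Real.rpow_add hs, Real.rpow_one]
      rw [h1, ← Real.rpow_add hs, ← Real.rpow_natCast s 2, ← Real.rpow_add hs]
      ring_nf
    have heq : 2 * (1 - Real.cos θ) * π * R = 2^(1-α)*π*s^(1-α)/Real.cos (θ/2) := by
      rw [hRdef, hhalf, hsin2, e1, e2]
      exact aux_alg π s (Real.cos (θ/2)) ((2:ℝ)^α) (s^α) (s^(2*α)) (s^(1-α))
        hsne (ne_of_gt hc2) (by positivity) (by positivity) e3
    calc C * (m:ℝ)^(α-1) < θ^(1-α) := step1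
      _ ≤ π^(1-α) * s^(1-α) := step2
      _ ≤ π * s^(1-α) := mul_le_mul_of_nonneg_right hπ1 hsr
      _ ≤ 2^(1-α) * (π * s^(1-α)) := le_mul_of_one_le_left (by positivity) h2a
      _ = 2^(1-α)*π*s^(1-α) := by ring
      _ ≤ 2^(1-α)*π*s^(1-α)/Real.cos (θ/2) := hcdiv
      _ = 2 * (1 - Real.cos θ) * π * R := heq.symm
  have hπ : 0 < π := Real.pi_pos
  clear_value C K s R e g c
  calc (1 / π) * ∫ x in Set.Ioi (0 : ℝ),
          1 / (x ^ α * ((1 + x) ^ 2 - 2 * (1 + x) * Real.cos θ + 1) * (1 + x) ^ (m + 1))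
      ≤ (1 / π) * (c * ∫ x in Ioi (0:ℝ), g x) := by
        apply mul_le_mul_of_nonneg_left hfg (by positivity)
    _ ≤ (1 / π) * (c * (C * (m:ℝ)^(α-1))) := by
        apply mul_le_mul_of_nonneg_left _ (by positivity)
        exact mul_le_mul_of_nonneg_left hgint hcpos.le
    _ < (1 / π) * (c * (2 * (1 - Real.cos θ) * π * R)) := by
        apply mul_lt_mul_of_pos_left _ (by positivity)
        exact mul_lt_mul_of_pos_left hfinal hcpos
    _ = R := by
        rw [hcdef]
        have h1 : (2*(1-Real.cos θ))⁻¹ * (2 * (1 - Real.cos θ) * π * R) = π * R := by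
          rw [show 2 * (1 - Real.cos θ) * π * R = (2*(1-Real.cos θ)) * (π * R) by ring,
            ← mul_assoc, inv_mul_cancel₀ (ne_of_gt (by linarith : (0:ℝ) < 2*(1-Real.cos θ))),
            one_mul]
        rw [h1, one_div, ← mul_assoc, inv_mul_cancel₀ (ne_of_gt hπ), one_mul]
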